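/- Let (α,μ) ∈ D_M^↑ × D_ℝ^↑, let ρ ∈ D_ℝ^↑, and let (ξ,β,ι) be the unique solution of the MVSP for (α, μ+ρ). Then: (a) for every t ≥ 0, the map a ↦ ξ_t[0, t+a] from [0,∞) to [0,∞) is right-continuous; (b) for every a ≥ 0, the map t ↦ ξ_t[0, t+a] is right-continuous; and (c) if in addition ξ_t[0,t) = 0 for all t > 0, then the map σ : [0,∞) → ℝ ∪ {∞} defined by σ(t) = inf supp[ξ_t] (with σ(t) = ∞ when ξ_t = 0) is Borel measurable. -/

import Mathlib

open MeasureTheory Filter Set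
open scoped NNReal ENNReal BoundedContinuousFunction Topology

noncomputable section

/-- Càdlàg on `[0,∞)`: right-continuous at every `t ≥ 0`, with left limits at
every `t > 0` (along `[0,t)`). -/
def CadlagOn {E : Type*} [TopologicalSpace E] (f : ℝ → E) : Prop :=
  (∀ t : ℝ, 0 ≤ t → ContinuousWithinAt f (Set.Ici t) t) ∧
  (∀ t : ℝ, 0 < t → ∃ l : E, Filter.Tendsto f (nhdsWithin t (Set.Ico 0 t)) (nhds l))

/-- `D_ℝ`: real-valued càdlàg paths on `[0,∞)`. -/
def DR (f : ℝ → ℝ) : Prop := CadlagOn f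

/-- `D_ℝ^↑`: nonnegative nondecreasing real-valued càdlàg paths on `[0,∞)`. -/
def DRup (f : ℝ → ℝ) : Prop :=
  CadlagOn f ∧ (∀ t : ℝ, 0 ≤ t → 0 ≤ f t) ∧ MonotoneOn f (Set.Ici 0)

/-- `D_M`: càdlàg paths with values in the space of finite nonnegative measures
on `[0,∞)`, equipped with the topology of weak convergence. -/
def DM (ζ : ℝ → FiniteMeasure ℝ≥0) : Prop := CadlagOn ζ

/-- `D_M^↑`: paths in `D_M` such that `t ↦ ∫ f dζ_t` is nondecreasing for every
nonnegative bounded continuous `f` on `[0,∞)`. -/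
def DMup (ζ : ℝ → FiniteMeasure ℝ≥0) : Prop :=
  CadlagOn ζ ∧
  ∀ f : ℝ≥0 →ᵇ ℝ≥0, MonotoneOn (fun t => (ζ t).testAgainstNN f) (Set.Ici 0)

/-- First component of the Skorokhod map on the half-line:
`Γ₁[ψ](t) = ψ(t) − inf_{s∈[0,t]} (ψ(s) ∧ 0)`. -/
def Gamma1 (ψ : ℝ → ℝ) (t : ℝ) : ℝ :=
  ψ t - sInf ((fun s => min (ψ s) 0) '' Set.Icc 0 t)

/-- Second component of the Skorokhod map on the half-line: `Γ₂[ψ] = Γ₁[ψ] − ψ`. -/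
def Gamma2 (ψ : ℝ → ℝ) (t : ℝ) : ℝ := Gamma1 ψ t - ψ t

/-- Extension of `g : [0,∞) → ℝ` by `0` on `(-∞,0)`. -/
def lsExt (g : ℝ → ℝ) : ℝ → ℝ := fun t => if t < 0 then 0 else g t

/- The Lebesgue–Stieltjes measure `m^g(B) = g(0)δ₀(B) + ∫_{(0,∞)} 1_B dg` of a
nonnegative nondecreasing right-continuous `g` on `[0,∞)`, realized as the
Stieltjes measure of the extension of `g` by `0` on `(-∞,0)`. -/
open scoped Classical in
def lsMeasure (g : ℝ → ℝ) : Measure ℝ :=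
  if h : Monotone (lsExt g) ∧ ∀ t, ContinuousWithinAt (lsExt g) (Set.Ici t) t then
    StieltjesFunction.measure ⟨lsExt g, h.1, h.2⟩
  else 0

/-- The measure-valued Skorokhod problem (MVSP): `(ξ,β,ι)` solves the MVSP for
the data `(α,μ)`. -/
def SolvesMVSP (α : ℝ → FiniteMeasure ℝ≥0) (μ : ℝ → ℝ)
    (ξ β : ℝ → FiniteMeasure ℝ≥0) (ι : ℝ → ℝ) : Prop :=
  (∀ x : ℝ≥0, ∀ t : ℝ, 0 ≤ t →
    (ξ t (Set.Iic x) : ℝ) = (α t (Set.Iic x) : ℝ) - μ t + (β t (Set.Ioi x) : ℝ) + ι t) ∧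
  (∀ x : ℝ≥0, ∀ᵐ t ∂(lsMeasure (fun s => (β s (Set.Ioi x) : ℝ))), (ξ t (Set.Iic x) : ℝ) = 0) ∧
  (∀ x : ℝ≥0, ∀ᵐ t ∂(lsMeasure ι), (ξ t (Set.Iic x) : ℝ) = 0) ∧
  (∀ t : ℝ, 0 ≤ t → (β t Set.univ : ℝ) + ι t = μ t)

/-- System (30): `(ξ,β,ι)` solves the MVSP for `(α, μ+ρ)` and `ξ_t[0,t) = 0`
for every `t > 0`. -/
def Solves30 (α : ℝ → FiniteMeasure ℝ≥0) (μ : ℝ → ℝ)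
    (ξ β : ℝ → FiniteMeasure ℝ≥0) (ι ρ : ℝ → ℝ) : Prop :=
  SolvesMVSP α (fun t => μ t + ρ t) ξ β ι ∧
  ∀ t : ℝ, 0 < t → (ξ t (Set.Iio (Real.toNNReal t)) : ℝ) = 0

/-- A minimal solution of system (30): a solution (lying in the appropriate
path spaces) whose reneging function `ρ` is pointwise below that of any other
solution. -/
def IsMinimalSol30 (α : ℝ → FiniteMeasure ℝ≥0) (μ : ℝ → ℝ)
    (ξ β : ℝ → FiniteMeasure ℝ≥0) (ι ρ : ℝ → ℝ) : Prop :=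
  (DM ξ ∧ DMup β ∧ DRup ι ∧ DRup ρ ∧ Solves30 α μ ξ β ι ρ) ∧
  ∀ (ξ' β' : ℝ → FiniteMeasure ℝ≥0) (ι' ρ' : ℝ → ℝ),
    DM ξ' → DMup β' → DRup ι' → DRup ρ' → Solves30 α μ ξ' β' ι' ρ' →
    ∀ t : ℝ, 0 ≤ t → ρ t ≤ ρ' t

/-- The (topological) support of a finite measure on `[0,∞)`: the set of points
all of whose open neighborhoods have positive measure. -/
def measSupport (ν : FiniteMeasure ℝ≥0) : Set ℝ≥0 :=
  {x : ℝ≥0 | ∀ u : Set ℝ≥0, IsOpen u → x ∈ u → ν u ≠ 0}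

/-- `σ(ν) = inf supp[ν]`, with value `∞` when `ν = 0`. -/
def sigmaOf (ν : FiniteMeasure ℝ≥0) : ℝ≥0∞ :=
  sInf ((fun x : ℝ≥0 => (x : ℝ≥0∞)) '' measSupport ν)

/-- Assumption A on the data `(α,μ)`. -/
def AssumptionA (α : ℝ → FiniteMeasure ℝ≥0) (μ : ℝ → ℝ) : Prop :=
  (∃ (ξ0 : FiniteMeasure ℝ≥0) (a0 : ℝ → FiniteMeasure ℝ≥0)
      (lam : ℝ → ℝ) (ν : FiniteMeasure ℝ≥0),
    (∀ x : ℝ≥0, ξ0 {x} = 0) ∧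
    ContinuousOn a0 (Set.Ici 0) ∧ DMup a0 ∧
    (∀ t : ℝ, 0 ≤ t → ∀ x : ℝ≥0, a0 t {x} = 0) ∧
    Measurable lam ∧ (∀ s : ℝ, 0 ≤ s → 0 ≤ lam s) ∧
    (∀ t : ℝ, 0 ≤ t → α t = a0 t + ξ0) ∧
    (∀ t : ℝ, 0 ≤ t → ∀ x : ℝ≥0, (a0 t (Set.Iic x) : ℝ) =
      ∫ s in Set.Icc (0:ℝ) t,
        (if s ≤ (x:ℝ) then lam s * (ν (Set.Iic (Real.toNNReal ((x:ℝ) - s))) : ℝ) else 0)) ∧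
    (∀ t : ℝ, 0 ≤ t →
      Filter.Tendsto (fun x : ℝ≥0 =>
          sSup ((fun s => lam s * (ν (Set.Iic x) : ℝ)) '' Set.Icc (0:ℝ) t))
        (nhdsWithin 0 (Set.Ioi 0)) (nhds 0))) ∧
  (∃ μ0 m : ℝ → ℝ,
    ContinuousOn μ0 (Set.Ici 0) ∧ (∀ t : ℝ, 0 ≤ t → 0 ≤ μ0 t) ∧
    MonotoneOn μ0 (Set.Ici 0) ∧
    Measurable m ∧ (∀ s : ℝ, 0 ≤ s → 0 ≤ m s) ∧
    (∀ t : ℝ, 0 ≤ t → MeasureTheory.IntegrableOn m (Set.Icc 0 t)) ∧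
    (∀ t : ℝ, 0 ≤ t → 0 < sInf (m '' Set.Icc (0:ℝ) t)) ∧
    (∀ t : ℝ, 0 ≤ t → μ t = μ0 t + ∫ s in Set.Icc (0:ℝ) t, m s))

namespace XiAux

lemma coe_enn (ν : FiniteMeasure ℝ≥0) (s : Set ℝ≥0) :
    ((ν s : ℝ≥0) : ℝ≥0∞) = (ν : Measure ℝ≥0) s :=
  ν.ennreal_coeFn_eq_coeFn_toMeasure s

lemma coe_real (ν : FiniteMeasure ℝ≥0) (s : Set ℝ≥0) :
    ((ν s : ℝ≥0) : ℝ) = ((ν : Measure ℝ≥0) s).toReal := by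
  rw [ENNReal.toReal, ← coe_enn, ENNReal.toNNReal_coe]

lemma deltas_pos : ∀ n : ℕ, (0:ℝ) < 1 / (n + 1) := fun n => by positivity

lemma deltas_lim : Tendsto (fun n : ℕ => (1:ℝ) / (n + 1)) atTop (𝓝 0) :=
  tendsto_one_div_add_atTop_nhds_zero_nat

/-- monotonicity at closed sets for testAgainstNN-monotone paths -/
lemma mono_closed {ζ : ℝ → FiniteMeasure ℝ≥0}
    (hm : ∀ f : ℝ≥0 →ᵇ ℝ≥0, MonotoneOn (fun t => (ζ t).testAgainstNN f) (Set.Ici 0))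
    {s t : ℝ} (hs : 0 ≤ s) (hst : s ≤ t) {F : Set ℝ≥0} (hF : IsClosed F) :
    (ζ s F : ℝ≥0) ≤ ζ t F := by
  rw [← ENNReal.coe_le_coe, coe_enn, coe_enn]
  have key : Tendsto (fun n : ℕ =>
      ∫⁻ ω, (thickenedIndicator (deltas_pos n) F ω : ℝ≥0∞) ∂(ζ t : Measure ℝ≥0)) atTop
      (𝓝 ((ζ t : Measure ℝ≥0) F)) :=
    tendsto_lintegral_thickenedIndicator_of_isClosed _ hF deltas_pos deltas_lim
  refine ge_of_tendsto' key fun n => ?_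
  calc (ζ s : Measure ℝ≥0) F
      ≤ ∫⁻ ω, (thickenedIndicator (deltas_pos n) F ω : ℝ≥0∞) ∂(ζ s : Measure ℝ≥0) :=
        measure_le_lintegral_thickenedIndicator _ hF.measurableSet (deltas_pos n)
    _ = ((ζ s).testAgainstNN (thickenedIndicator (deltas_pos n) F) : ℝ≥0∞) :=
        FiniteMeasure.testAgainstNN_coe_eq.symm
    _ ≤ ((ζ t).testAgainstNN (thickenedIndicator (deltas_pos n) F) : ℝ≥0∞) :=
        ENNReal.coe_le_coe.2 (hm _ hs (le_trans hs hst) hst)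
    _ = _ := FiniteMeasure.testAgainstNN_coe_eq

/-- right-continuity (within Ici t) of t' ↦ ζ_{t'}(F) for closed F, for monotone cadlag paths -/
lemma rc_closed {ζ : ℝ → FiniteMeasure ℝ≥0} {t : ℝ}
    (hc : ContinuousWithinAt ζ (Set.Ici t) t)
    (hm : ∀ f : ℝ≥0 →ᵇ ℝ≥0, MonotoneOn (fun t => (ζ t).testAgainstNN f) (Set.Ici 0))
    (ht : 0 ≤ t) {F : Set ℝ≥0} (hF : IsClosed F) :
    ContinuousWithinAt (fun t' => ((ζ t' F : ℝ≥0) : ℝ)) (Set.Ici t) t := by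
  rw [ContinuousWithinAt, Metric.tendsto_nhds]
  intro ε hε
  -- choose a thickened indicator close at time t
  have key : Tendsto (fun n : ℕ =>
      (((ζ t).testAgainstNN (thickenedIndicator (deltas_pos n) F) : ℝ≥0) : ℝ)) atTop
      (𝓝 ((ζ t F : ℝ≥0) : ℝ)) := by
    have h1 : Tendsto (fun n : ℕ =>
        ∫⁻ ω, (thickenedIndicator (deltas_pos n) F ω : ℝ≥0∞) ∂(ζ t : Measure ℝ≥0)) atTop
        (𝓝 ((ζ t : Measure ℝ≥0) F)) :=
      tendsto_lintegral_thickenedIndicator_of_isClosed _ hF deltas_pos deltas_lim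
    have h2 := (ENNReal.tendsto_toReal (measure_ne_top (ζ t : Measure ℝ≥0) F)).comp h1
    rw [coe_real]
    have h3 : (fun n : ℕ =>
        (((ζ t).testAgainstNN (thickenedIndicator (deltas_pos n) F) : ℝ≥0) : ℝ)) =
        fun n : ℕ => (∫⁻ ω, (thickenedIndicator (deltas_pos n) F ω : ℝ≥0∞)
          ∂(ζ t : Measure ℝ≥0)).toReal := funext fun n => by
      rw [← FiniteMeasure.testAgainstNN_coe_eq, ENNReal.toReal, ENNReal.toNNReal_coe]
    rw [h3]
    exact h2
  obtain ⟨n, hn⟩ := (key.eventually_lt_const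
    (show ((ζ t F : ℝ≥0) : ℝ) < (ζ t F : ℝ≥0) + ε / 2 by linarith)).exists
  set g := thickenedIndicator (deltas_pos n) F with hg
  -- weak right-continuity of the test integral
  have hcg : Tendsto (fun t' => (((ζ t').testAgainstNN g : ℝ≥0) : ℝ)) (𝓝[Set.Ici t] t)
      (𝓝 (((ζ t).testAgainstNN g : ℝ≥0) : ℝ)) :=
    (NNReal.continuous_coe.tendsto _).comp
      (((FiniteMeasure.continuous_testAgainstNN_eval g).tendsto _).comp hc)
  have hev : ∀ᶠ t' in 𝓝[Set.Ici t] t,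
      (((ζ t').testAgainstNN g : ℝ≥0) : ℝ) < (ζ t F : ℝ≥0) + ε :=
    hcg.eventually_lt_const (by linarith)
  filter_upwards [hev, self_mem_nhdsWithin] with t' h1 h2
  have hub : ((ζ t' F : ℝ≥0) : ℝ) ≤ (((ζ t').testAgainstNN g : ℝ≥0) : ℝ) := by
    refine NNReal.coe_le_coe.2 ?_
    rw [← ENNReal.coe_le_coe, coe_enn, FiniteMeasure.testAgainstNN_coe_eq]
    exact measure_le_lintegral_thickenedIndicator _ hF.measurableSet (deltas_pos n)
  have hlb : ((ζ t F : ℝ≥0) : ℝ) ≤ ((ζ t' F : ℝ≥0) : ℝ) :=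
    NNReal.coe_le_coe.2 (mono_closed hm ht h2 hF)
  rw [Real.dist_eq, abs_sub_lt_iff]
  constructor <;> linarith


/-- right continuity in the set parameter, quantitative form -/
lemma exists_delta (ν : FiniteMeasure ℝ≥0) (x : ℝ≥0) {ε : ℝ} (hε : 0 < ε) :
    ∃ δ : ℝ≥0, 0 < δ ∧ ((ν (Iic (x + δ)) : ℝ≥0) : ℝ) < ((ν (Iic x) : ℝ≥0) : ℝ) + ε := by
  have hiter : (⋂ n : ℕ, Iic (x + ((n : ℝ≥0) + 1)⁻¹)) = Iic x := by
    ext y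
    simp only [mem_iInter, mem_Iic]
    constructor
    · intro h
      by_contra hy
      push_neg at hy
      obtain ⟨n, hn⟩ := exists_nat_one_div_lt (show (0:ℝ) < (y:ℝ) - x by
        have := NNReal.coe_lt_coe.2 hy; linarith)
      have h2 : ((((n:ℝ≥0) + 1)⁻¹ : ℝ≥0) : ℝ) < (y : ℝ) - x := by
        rw [NNReal.coe_inv]
        push_cast
        rw [inv_eq_one_div]
        exact hn
      have h3 := NNReal.coe_le_coe.2 (h n)
      rw [NNReal.coe_add] at h3
      linarith
    · intro h n
      exact le_trans h (by simp)
  have hmeas : Tendsto (fun n : ℕ => (ν : Measure ℝ≥0) (Iic (x + ((n : ℝ≥0) + 1)⁻¹)))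
      atTop (𝓝 ((ν : Measure ℝ≥0) (Iic x))) := by
    have := tendsto_measure_iInter_atTop (μ := (ν : Measure ℝ≥0))
      (s := fun n : ℕ => Iic (x + ((n : ℝ≥0) + 1)⁻¹))
      (fun n => measurableSet_Iic.nullMeasurableSet)
      (fun m n hmn => Iic_subset_Iic.2 (by gcongr))
      ⟨0, measure_ne_top _ _⟩
    rwa [hiter] at this
  have hreal : Tendsto (fun n : ℕ => ((ν (Iic (x + ((n : ℝ≥0) + 1)⁻¹)) : ℝ≥0) : ℝ))
      atTop (𝓝 ((ν (Iic x) : ℝ≥0) : ℝ)) := by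
    simp only [coe_real]
    exact (ENNReal.tendsto_toReal (measure_ne_top _ _)).comp hmeas
  have hev := hreal.eventually_lt_const (show ((ν (Iic x) : ℝ≥0) : ℝ) < (ν (Iic x) : ℝ≥0) + ε by linarith)
  obtain ⟨n, hn⟩ := hev.exists
  exact ⟨((n : ℝ≥0) + 1)⁻¹, by positivity, hn⟩


lemma ioi_split (ν : FiniteMeasure ℝ≥0) (x : ℝ≥0) :
    ((ν (Ioi x) : ℝ≥0) : ℝ) = ((ν univ : ℝ≥0) : ℝ) - ((ν (Iic x) : ℝ≥0) : ℝ) := by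
  have h := measure_add_measure_compl (μ := (ν : Measure ℝ≥0)) (measurableSet_Iic (a := x))
  rw [compl_Iic] at h
  have h2 : ((ν univ : ℝ≥0) : ℝ) = ((ν (Iic x) : ℝ≥0) : ℝ) + ((ν (Ioi x) : ℝ≥0) : ℝ) := by
    rw [coe_real, coe_real, coe_real, ← ENNReal.toReal_add (measure_ne_top _ _) (measure_ne_top _ _), h]
  linarith

lemma rc_xi {α ξ β : ℝ → FiniteMeasure ℝ≥0} {μmix ι : ℝ → ℝ} {t : ℝ}
    (heq : ∀ x : ℝ≥0, ∀ t : ℝ, 0 ≤ t →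
      ((ξ t (Iic x) : ℝ≥0) : ℝ) = ((α t (Iic x) : ℝ≥0) : ℝ) - μmix t
        + ((β t (Ioi x) : ℝ≥0) : ℝ) + ι t)
    (hαc : ContinuousWithinAt α (Set.Ici t) t)
    (hαm : ∀ f : ℝ≥0 →ᵇ ℝ≥0, MonotoneOn (fun t => (α t).testAgainstNN f) (Set.Ici 0))
    (hβc : ContinuousWithinAt β (Set.Ici t) t)
    (hβm : ∀ f : ℝ≥0 →ᵇ ℝ≥0, MonotoneOn (fun t => (β t).testAgainstNN f) (Set.Ici 0))
    (hμc : ContinuousWithinAt μmix (Set.Ici t) t)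
    (hιc : ContinuousWithinAt ι (Set.Ici t) t)
    (ht : 0 ≤ t) (x : ℝ≥0) :
    ContinuousWithinAt (fun t' => ((ξ t' (Iic x) : ℝ≥0) : ℝ)) (Set.Ici t) t := by
  have hcont : ContinuousWithinAt (fun t' =>
      ((α t' (Iic x) : ℝ≥0) : ℝ) - μmix t'
        + (((β t' univ : ℝ≥0) : ℝ) - ((β t' (Iic x) : ℝ≥0) : ℝ)) + ι t') (Set.Ici t) t :=
    (((rc_closed hαc hαm ht isClosed_Iic).sub hμc).add
      ((rc_closed hβc hβm ht isClosed_univ).sub (rc_closed hβc hβm ht isClosed_Iic))).add hιc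
  refine hcont.congr (fun t' ht' => ?_) ?_
  · rw [heq x t' (le_trans ht ht'), ioi_split]; try ring
  · rw [heq x t ht, ioi_split]; try ring

lemma cont_a (ν : FiniteMeasure ℝ≥0) (c a : ℝ) :
    ContinuousWithinAt (fun a' => ((ν (Iic (Real.toNNReal (c + a'))) : ℝ≥0) : ℝ))
      (Set.Ici a) a := by
  rw [ContinuousWithinAt, Metric.tendsto_nhds]
  intro ε hε
  obtain ⟨δ, hδ, hbound⟩ := exists_delta ν (Real.toNNReal (c + a)) hε
  filter_upwards [Ico_mem_nhdsGE (show a < a + (δ : ℝ) by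
    have := hδ; nlinarith [NNReal.coe_pos.2 hδ])] with a' ha'
  have hmono : ν (Iic (Real.toNNReal (c + a))) ≤ ν (Iic (Real.toNNReal (c + a'))) :=
    ν.apply_mono (Iic_subset_Iic.2 (Real.toNNReal_mono (by linarith [ha'.1])))
  have hup : Real.toNNReal (c + a') ≤ Real.toNNReal (c + a) + δ := by
    have h1 : c + a' = (c + a) + (a' - a) := by ring
    rw [h1]
    refine le_trans Real.toNNReal_add_le ?_
    gcongr
    rw [Real.toNNReal_le_iff_le_coe]
    have := ha'.2
    linarith
  have hup2 : ((ν (Iic (Real.toNNReal (c + a'))) : ℝ≥0) : ℝ)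
      ≤ ((ν (Iic (Real.toNNReal (c + a) + δ)) : ℝ≥0) : ℝ) :=
    NNReal.coe_le_coe.2 (ν.apply_mono (Iic_subset_Iic.2 hup))
  have hlow := NNReal.coe_le_coe.2 hmono
  rw [Real.dist_eq, abs_sub_lt_iff]
  constructor <;> linarith

lemma cont_b {α ξ β : ℝ → FiniteMeasure ℝ≥0} {μmix ι : ℝ → ℝ}
    (heq : ∀ x : ℝ≥0, ∀ t : ℝ, 0 ≤ t →
      ((ξ t (Iic x) : ℝ≥0) : ℝ) = ((α t (Iic x) : ℝ≥0) : ℝ) - μmix t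
        + ((β t (Ioi x) : ℝ≥0) : ℝ) + ι t)
    (hαc : ∀ t : ℝ, 0 ≤ t → ContinuousWithinAt α (Set.Ici t) t)
    (hαm : ∀ f : ℝ≥0 →ᵇ ℝ≥0, MonotoneOn (fun t => (α t).testAgainstNN f) (Set.Ici 0))
    (hβc : ∀ t : ℝ, 0 ≤ t → ContinuousWithinAt β (Set.Ici t) t)
    (hβm : ∀ f : ℝ≥0 →ᵇ ℝ≥0, MonotoneOn (fun t => (β t).testAgainstNN f) (Set.Ici 0))
    (hμc : ∀ t : ℝ, 0 ≤ t → ContinuousWithinAt μmix (Set.Ici t) t)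
    (hιc : ∀ t : ℝ, 0 ≤ t → ContinuousWithinAt ι (Set.Ici t) t)
    {a t : ℝ} (ha : 0 ≤ a) (ht : 0 ≤ t) :
    ContinuousWithinAt (fun t' => ((ξ t' (Iic (Real.toNNReal (t' + a))) : ℝ≥0) : ℝ))
      (Set.Ici t) t := by
  set x := Real.toNNReal (t + a) with hx
  have hRC : ContinuousWithinAt (fun t' => ((ξ t' (Iic x) : ℝ≥0) : ℝ)) (Set.Ici t) t :=
    rc_xi heq (hαc t ht) hαm (hβc t ht) hβm (hμc t ht) (hιc t ht) ht x
  rw [ContinuousWithinAt, Metric.tendsto_nhds]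
  intro ε hε
  have ev1 := Metric.tendsto_nhds.1 hRC (ε / 2) (by linarith)
  have hαRC := rc_closed (hαc t ht) hαm ht (isClosed_Iic (a := x))
  have ev2 := Metric.tendsto_nhds.1 hαRC (ε / 8) (by linarith)
  rw [eventually_iff, Metric.mem_nhdsWithin_iff] at ev2
  obtain ⟨δ₀, hδ₀, hP⟩ := ev2
  set T := t + δ₀ / 2 with hT'
  have hTmem : T ∈ Metric.ball t δ₀ ∩ Set.Ici t := by
    constructor
    · rw [Metric.mem_ball, Real.dist_eq]
      rw [abs_sub_lt_iff]; constructor <;> simp [hT'] <;> linarith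
    · simp [hT']; linarith
  have hT : ((α T (Iic x) : ℝ≥0) : ℝ) < ((α t (Iic x) : ℝ≥0) : ℝ) + ε / 8 := by
    have := hP hTmem
    rw [mem_setOf_eq, Real.dist_eq, abs_sub_lt_iff] at this
    linarith [this.1]
  obtain ⟨δ₁, hδ₁pos, hδ₁⟩ := exists_delta (α T) x (show (0:ℝ) < ε / 8 by linarith)
  set r := min (δ₀ / 2) (δ₁ : ℝ) with hr
  have hrpos : 0 < r := lt_min (by linarith) (NNReal.coe_pos.2 hδ₁pos)
  filter_upwards [ev1, Ico_mem_nhdsGE (show t < t + r by linarith)] with t' h1 h2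
  have ht'0 : 0 ≤ t' := le_trans ht h2.1
  have htT : t' ≤ T := by
    have : t' < t + r := h2.2
    have : r ≤ δ₀ / 2 := min_le_left _ _
    simp only [hT']
    linarith [h2.2]
  set x' := Real.toNNReal (t' + a) with hx'
  have hx'₁ : x ≤ x' := Real.toNNReal_mono (by linarith [h2.1])
  have hx'₂ : x' ≤ x + δ₁ := by
    have h3 : t' + a = (t + a) + (t' - t) := by ring
    rw [hx', h3]
    refine le_trans Real.toNNReal_add_le ?_
    gcongr
    rw [Real.toNNReal_le_iff_le_coe]
    have h4 : t' < t + r := h2.2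
    have h5 : r ≤ (δ₁ : ℝ) := min_le_right _ _
    linarith
  have E1 := heq x' t' ht'0
  have E2 := heq x t' ht'0
  have A2 : ((β t' (Ioi x') : ℝ≥0) : ℝ) ≤ ((β t' (Ioi x) : ℝ≥0) : ℝ) :=
    NNReal.coe_le_coe.2 ((β t').apply_mono (Ioi_subset_Ioi hx'₁))
  have A3 : ((α t' (Iic x') : ℝ≥0) : ℝ) ≤ ((α T (Iic x') : ℝ≥0) : ℝ) :=
    NNReal.coe_le_coe.2 (mono_closed hαm ht'0 htT isClosed_Iic)
  have A4 : ((α T (Iic x') : ℝ≥0) : ℝ) ≤ ((α T (Iic (x + δ₁)) : ℝ≥0) : ℝ) :=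
    NNReal.coe_le_coe.2 ((α T).apply_mono (Iic_subset_Iic.2 hx'₂))
  have A5 : ((α t (Iic x) : ℝ≥0) : ℝ) ≤ ((α t' (Iic x) : ℝ≥0) : ℝ) :=
    NNReal.coe_le_coe.2 (mono_closed hαm ht h2.1 isClosed_Iic)
  have A6 : ((ξ t' (Iic x) : ℝ≥0) : ℝ) ≤ ((ξ t' (Iic x') : ℝ≥0) : ℝ) :=
    NNReal.coe_le_coe.2 ((ξ t').apply_mono (Iic_subset_Iic.2 hx'₁))
  rw [Real.dist_eq, abs_sub_lt_iff] at h1 ⊢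
  constructor <;> linarith [h1.1, h1.2]


/-- right-continuous on [0,∞) implies measurable on [0,∞) -/
lemma meas_rc {f : ℝ → ℝ} (hf : ∀ t : ℝ, 0 ≤ t → ContinuousWithinAt f (Set.Ici t) t) :
    Measurable fun t : Set.Ici (0:ℝ) => f t := by
  have hmeas : ∀ n : ℕ, Measurable fun t : Set.Ici (0:ℝ) =>
      f ((⌈(t : ℝ) * 2 ^ n⌉ : ℤ) / 2 ^ n) := by
    intro n
    exact ((measurable_of_countable (fun k : ℤ => f ((k : ℝ) / 2 ^ n))).comp
      (Int.measurable_ceil.comp (measurable_subtype_coe.mul_const _)))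
  refine measurable_of_tendsto_metrizable hmeas (tendsto_pi_nhds.2 fun t => ?_)
  obtain ⟨t0, ht0⟩ := t
  simp only
  have hpow : ∀ n : ℕ, (0:ℝ) < 2 ^ n := fun n => by positivity
  have hge : ∀ n : ℕ, t0 ≤ (⌈t0 * 2 ^ n⌉ : ℤ) / 2 ^ n := fun n => by
    rw [le_div_iff₀ (hpow n)]
    exact Int.le_ceil _
  have hle : ∀ n : ℕ, ((⌈t0 * 2 ^ n⌉ : ℤ) : ℝ) / 2 ^ n ≤ t0 + (1 / 2) ^ n := fun n => by
    rw [div_le_iff₀ (hpow n)]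
    have := (Int.ceil_lt_add_one (t0 * 2 ^ n)).le
    have h2 : (t0 + (1 / 2) ^ n) * 2 ^ n = t0 * 2 ^ n + 1 := by
      rw [add_mul, ← mul_pow]
      norm_num
    rw [h2]
    exact this
  have htend : Tendsto (fun n : ℕ => ((⌈t0 * 2 ^ n⌉ : ℤ) : ℝ) / 2 ^ n) atTop (𝓝 t0) := by
    have hub : Tendsto (fun n : ℕ => t0 + (1 / 2 : ℝ) ^ n) atTop (𝓝 (t0 + 0)) :=
      tendsto_const_nhds.add (tendsto_pow_atTop_nhds_zero_of_lt_one (by norm_num) (by norm_num))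
    rw [add_zero] at hub
    exact tendsto_of_tendsto_of_tendsto_of_le_of_le tendsto_const_nhds hub hge hle
  have := (hf t0 ht0).tendsto.comp
    (tendsto_nhdsWithin_of_tendsto_nhds_of_eventually_within _ htend
      (Eventually.of_forall fun n => hge n))
  exact this

/-- complement of support is null -/
lemma supp_compl_null (ν : FiniteMeasure ℝ≥0) :
    (ν : Measure ℝ≥0) (measSupport ν)ᶜ = 0 := by
  have hco : (measSupport ν)ᶜ = ⋃₀ {u : Set ℝ≥0 | IsOpen u ∧ (ν : Measure ℝ≥0) u = 0} := by
    ext x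
    simp only [mem_compl_iff, measSupport, mem_setOf_eq, mem_sUnion]
    constructor
    · intro h
      push_neg at h
      obtain ⟨u, hu, hxu, hνu⟩ := h
      refine ⟨u, ⟨hu, ?_⟩, hxu⟩
      rw [← coe_enn, hνu, ENNReal.coe_zero]
    · rintro ⟨u, ⟨hu, hνu⟩, hxu⟩ h
      exact h u hu hxu (by rw [← ENNReal.coe_eq_zero, coe_enn]; exact hνu)
  obtain ⟨T, hTc, hTS, hTU⟩ := TopologicalSpace.isOpen_sUnion_countable
    {u : Set ℝ≥0 | IsOpen u ∧ (ν : Measure ℝ≥0) u = 0} (fun s hs => hs.1)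
  rw [hco, ← hTU]
  exact (measure_sUnion_null_iff hTc).2 fun u hu => (hTS hu).2

lemma sigma_eq (ν : FiniteMeasure ℝ≥0) :
    sigmaOf ν = ⨅ q : ℚ,
      (if 0 ≤ q ∧ (ν (Iic (Real.toNNReal q)) : ℝ≥0) ≠ 0
        then ((Real.toNNReal (q : ℝ) : ℝ≥0) : ℝ≥0∞) else ⊤) := by
  apply le_antisymm
  · refine le_iInf fun q => ?_
    split_ifs with h
    · by_contra hlt
      push_neg at hlt
      have hsub : Iic (Real.toNNReal (q:ℝ)) ⊆ (measSupport ν)ᶜ := by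
        intro y hy hymem
        have : ((Real.toNNReal (q:ℝ) : ℝ≥0) : ℝ≥0∞) < (y : ℝ≥0∞) :=
          lt_of_lt_of_le hlt (sInf_le ⟨y, hymem, rfl⟩)
        exact absurd (ENNReal.coe_le_coe.2 hy) (not_le.2 this)
      have := measure_mono (μ := (ν : Measure ℝ≥0)) hsub
      rw [supp_compl_null, nonpos_iff_eq_zero] at this
      exact h.2 (by rw [← ENNReal.coe_eq_zero, coe_enn]; exact this)
    · exact le_top
  · refine le_sInf ?_
    rintro b ⟨x, hx, rfl⟩
    refine ENNReal.le_of_forall_pos_le_add fun ε hε hxtop => ?_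
    obtain ⟨q, hq1, hq2⟩ := exists_rat_btwn (show (x:ℝ) < (x:ℝ) + ε by
      exact lt_add_of_pos_right _ (by exact_mod_cast hε))
    have hq0 : (0:ℚ) ≤ q := by
      have : (0:ℝ) ≤ x := x.coe_nonneg
      exact_mod_cast le_of_lt (lt_of_le_of_lt this hq1)
    have hcoe : ((Real.toNNReal (q:ℝ) : ℝ≥0) : ℝ) = (q:ℝ) :=
      Real.coe_toNNReal _ (by exact_mod_cast hq0)
    have hxlt : x < Real.toNNReal (q:ℝ) := by
      rw [← NNReal.coe_lt_coe, hcoe]; exact hq1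
    have hne : (ν (Iic (Real.toNNReal (q:ℝ))) : ℝ≥0) ≠ 0 := by
      intro h0
      have h1 : ν (Iio (Real.toNNReal (q:ℝ))) ≠ 0 := hx _ isOpen_Iio hxlt
      have h2 : ν (Iio (Real.toNNReal (q:ℝ))) ≤ ν (Iic (Real.toNNReal (q:ℝ))) :=
        ν.apply_mono Iio_subset_Iic_self
      rw [h0, le_zero_iff] at h2
      exact h1 h2
    refine le_trans (iInf_le _ q) ?_
    rw [if_pos ⟨hq0, hne⟩]
    have : ((Real.toNNReal (q:ℝ) : ℝ≥0) : ℝ≥0∞) ≤ (x : ℝ≥0∞) + ε := by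
      rw [← ENNReal.coe_add, ENNReal.coe_le_coe, ← NNReal.coe_le_coe, hcoe, NNReal.coe_add]
      exact le_of_lt hq2
    exact this


end XiAux

/-- Regularity of `ξ` for the solution of the MVSP for data `(α, μ+ρ)`:
right-continuity of `a ↦ ξ_t[0,t+a]` and of `t ↦ ξ_t[0,t+a]`, and Borel
measurability of `σ(t) = inf supp[ξ_t]` on `[0,∞)` when `ξ_t[0,t) = 0`. -/
theorem xi_right_continuity_and_sigma_measurable
    (α ξ β : ℝ → FiniteMeasure ℝ≥0) (μ ι ρ : ℝ → ℝ)
    (hα : DMup α) (hμ : DRup μ) (hρ : DRup ρ)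
    (hξ : DM ξ) (hβ : DMup β) (hι : DRup ι)
    (hsol : SolvesMVSP α (fun t => μ t + ρ t) ξ β ι) :
    (∀ t : ℝ, 0 ≤ t → ∀ a : ℝ, 0 ≤ a →
      ContinuousWithinAt
        (fun a' : ℝ => (ξ t (Set.Iic (Real.toNNReal (t + a'))) : ℝ)) (Set.Ici a) a) ∧
    (∀ a : ℝ, 0 ≤ a → ∀ t : ℝ, 0 ≤ t →
      ContinuousWithinAt
        (fun t' : ℝ => (ξ t' (Set.Iic (Real.toNNReal (t' + a))) : ℝ)) (Set.Ici t) t) ∧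
    ((∀ t : ℝ, 0 < t → (ξ t (Set.Iio (Real.toNNReal t)) : ℝ) = 0) →
      Measurable ((Set.Ici (0:ℝ)).restrict (fun t => sigmaOf (ξ t)))) := by
  have heq := hsol.1
  have hμmix : ∀ t : ℝ, 0 ≤ t →
      ContinuousWithinAt (fun s => μ s + ρ s) (Set.Ici t) t :=
    fun t ht => (hμ.1.1 t ht).add (hρ.1.1 t ht)
  refine ⟨?_, ?_, ?_⟩
  · intro t _ a _
    exact XiAux.cont_a (ξ t) t a
  · intro a ha t ht
    exact XiAux.cont_b heq hα.1.1 hα.2 hβ.1.1 hβ.2 hμmix hι.1.1 ha ht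
  · intro _
    have hrc : ∀ q : ℚ, ∀ t : ℝ, 0 ≤ t →
        ContinuousWithinAt (fun t' => ((ξ t' (Iic (Real.toNNReal (q:ℝ))) : ℝ≥0) : ℝ))
          (Set.Ici t) t := fun q t ht =>
      XiAux.rc_xi heq (hα.1.1 t ht) hα.2 (hβ.1.1 t ht) hβ.2 (hμmix t ht) (hι.1.1 t ht) ht _
    have hmeasq : ∀ q : ℚ, Measurable fun t : Set.Ici (0:ℝ) =>
        (if 0 ≤ q ∧ (ξ t (Iic (Real.toNNReal (q:ℝ))) : ℝ≥0) ≠ 0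
          then ((Real.toNNReal (q : ℝ) : ℝ≥0) : ℝ≥0∞) else ⊤) := by
      intro q
      by_cases hq : 0 ≤ q
      · have hm : Measurable fun t : Set.Ici (0:ℝ) =>
            ((ξ t (Iic (Real.toNNReal (q:ℝ))) : ℝ≥0) : ℝ) :=
          XiAux.meas_rc (fun t ht => hrc q t ht)
        have hset : MeasurableSet {t : Set.Ici (0:ℝ) |
            0 ≤ q ∧ (ξ t (Iic (Real.toNNReal (q:ℝ))) : ℝ≥0) ≠ 0} := by
          have h1 : {t : Set.Ici (0:ℝ) |
              0 ≤ q ∧ (ξ t (Iic (Real.toNNReal (q:ℝ))) : ℝ≥0) ≠ 0} =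
              (fun t : Set.Ici (0:ℝ) =>
                ((ξ t (Iic (Real.toNNReal (q:ℝ))) : ℝ≥0) : ℝ)) ⁻¹' ({0}ᶜ) := by
            ext t
            simp only [mem_setOf_eq, mem_preimage, mem_compl_iff, mem_singleton_iff, hq,
              true_and, NNReal.coe_eq_zero]
          rw [h1]
          exact hm (measurableSet_singleton 0).compl
        exact Measurable.ite hset measurable_const measurable_const
      · simp only [hq, false_and, if_false]
        exact measurable_const
    have hfun : (Set.Ici (0:ℝ)).restrict (fun t => sigmaOf (ξ t)) =
        fun t : Set.Ici (0:ℝ) => ⨅ q : ℚ,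
          (if 0 ≤ q ∧ (ξ t (Iic (Real.toNNReal (q:ℝ))) : ℝ≥0) ≠ 0
            then ((Real.toNNReal (q : ℝ) : ℝ≥0) : ℝ≥0∞) else ⊤) := by
      funext t
      exact XiAux.sigma_eq (ξ t)
    rw [hfun]
    exact Measurable.iInf fun q => hmeasq q

end
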